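/- Let μ⁻ be a probability measure on one-sided infinite words Σ⁻ over a finite alphabet with the quasi-Bernoulli property: there exists Ĉ > 1 such that Ĉ^{-1} ≤ μ⁻(āb̄c̄b̄ē)/(μ⁻(ā)μ⁻(b̄)μ⁻(c̄)μ⁻(b̄)μ⁻(ē)) ≤ Ĉ for all admissible concatenations, and suppose μ⁻(b̄) ≤ C̄·ρ^{(c/k)·d} for every word b̄ of scale ρ^{c/k}, with d, c/k > 0. Let m = ⌈C̃·log(1/ρ)⌉ bound the length of words of scale ρ. Then the μ⁻-measure of the set of words of scale ρ containing a subword of scale ρ^{c/k} that repeats in two disjoint index intervals is at most (m+1)⁴·Ĉ·C̄·ρ^{(c/k)·d}, which tends to 0 as ρ → 0. -/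

import Mathlib

open scoped Classical


private lemma sum_biUnion_le' {ι β : Type*} [DecidableEq β] (f : β → ℝ) (hf : ∀ b, 0 ≤ f b)
    (s : Finset ι) (t : ι → Finset β) :
    ∑ x ∈ s.biUnion t, f x ≤ ∑ i ∈ s, ∑ x ∈ t i, f x := by
  classical
  induction s using Finset.induction with
  | empty => simp
  | insert a s h ih =>
      rw [Finset.biUnion_insert, Finset.sum_insert h]
      calc ∑ x ∈ t a ∪ s.biUnion t, f x
          ≤ ∑ x ∈ t a, f x + ∑ x ∈ s.biUnion t, f x := by
            have := Finset.sum_union_inter (s₁ := t a) (s₂ := s.biUnion t) (f := f)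
            have h2 : 0 ≤ ∑ x ∈ t a ∩ s.biUnion t, f x := Finset.sum_nonneg fun x _ => hf x
            linarith
        _ ≤ _ := by linarith [ih]

private lemma decomp_canon {α : Type*} (a b c e : List α) :
    let w := a ++ b ++ c ++ b ++ e
    w.take a.length = a ∧ (w.drop a.length).take b.length = b ∧
    (w.drop (a.length + b.length)).take c.length = c ∧
    w.drop (a.length + b.length + c.length + b.length) = e := by
  intro w
  have hw : w = a ++ (b ++ (c ++ (b ++ e))) := by simp [w, List.append_assoc]
  refine ⟨?_, ?_, ?_, ?_⟩
  · rw [hw, List.take_left]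
  · rw [hw, List.drop_left, List.take_left]
  · rw [hw, ← List.drop_drop, List.drop_left, List.drop_left, List.take_left]
  · rw [hw]
    rw [show a.length + b.length + c.length + b.length =
      a.length + (b.length + (c.length + b.length)) by ring]
    rw [← List.drop_drop, List.drop_left, ← List.drop_drop, List.drop_left,
      ← List.drop_drop, List.drop_left, List.drop_left]

/-- Quasi-Bernoulli estimate for recurrent leaves: the total mass of the words of
scale `ρ` containing a subword of scale `ρ^κ` repeated in two disjoint index
intervals is at most `(m+1)⁴ Ĉ C̄ ρ^{κ d}`, where `m = ⌈C̃ log(1/ρ)⌉` bounds the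
length of words of scale `ρ`. -/
theorem stmt10 {α : Type*} (W : ℕ → Finset (List α)) (m : List α → ℝ)
    (SC : ℝ → List α → Prop)
    (Chat Cbar Ctil ρ κ d : ℝ)
    (hChat : 1 < Chat) (hCbar : 0 < Cbar) (hCtil : 0 < Ctil)
    (hρ0 : 0 < ρ) (hρ1 : ρ < 1) (hκ : 0 < κ) (hd : 0 < d)
    (hm0 : ∀ w, 0 ≤ m w)
    (hQB : ∀ a b c e : List α,
      Chat⁻¹ * (m a * m b * m c * m b * m e) ≤ m (a ++ b ++ c ++ b ++ e) ∧
      m (a ++ b ++ c ++ b ++ e) ≤ Chat * (m a * m b * m c * m b * m e))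
    (hscale : ∀ b : List α, SC (ρ ^ κ) b → m b ≤ Cbar * ρ ^ (κ * d))
    (hsum : ∀ n : ℕ, ∑ w ∈ W n, m w ≤ 1)
    (hlenW : ∀ n, ∀ w ∈ W n, w.length = n)
    (hfactor : ∀ a b c e : List α,
      a ++ b ++ c ++ b ++ e ∈ W (a ++ b ++ c ++ b ++ e).length →
      a ∈ W a.length ∧ b ∈ W b.length ∧ c ∈ W c.length ∧ e ∈ W e.length)
    (hlen : ∀ w : List α, SC ρ w → w.length ≤ ⌈Ctil * Real.log (1 / ρ)⌉₊) :
    ∑ w ∈ ((Finset.range (⌈Ctil * Real.log (1 / ρ)⌉₊ + 1)).biUnion W).filter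
        (fun w => SC ρ w ∧
          ∃ a b c e : List α, w = a ++ b ++ c ++ b ++ e ∧ SC (ρ ^ κ) b),
      m w
    ≤ ((⌈Ctil * Real.log (1 / ρ)⌉₊ : ℝ) + 1) ^ 4 * Chat * Cbar * ρ ^ (κ * d) := by
  classical
  set M := ⌈Ctil * Real.log (1 / ρ)⌉₊ with hMdef
  set S := ((Finset.range (M + 1)).biUnion W).filter
        (fun w => SC ρ w ∧ ∃ a b c e : List α, w = a ++ b ++ c ++ b ++ e ∧ SC (ρ ^ κ) b)
    with hSdef
  set R := Cbar * ρ ^ (κ * d) with hRdef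
  have hrp : (0:ℝ) ≤ ρ ^ (κ * d) := Real.rpow_nonneg hρ0.le _
  have hR0 : 0 ≤ R := mul_nonneg hCbar.le hrp
  have hChat0 : (0:ℝ) < Chat := lt_trans one_pos hChat
  have hmemW : ∀ w ∈ (Finset.range (M + 1)).biUnion W, w ∈ W w.length := by
    intro w hw
    obtain ⟨n, _, hwn⟩ := Finset.mem_biUnion.mp hw
    rwa [hlenW n w hwn]
  set T : ℕ × ℕ × ℕ × ℕ → Finset (List α) := fun q =>
    S.filter (fun w => ∃ a b c e : List α, w = a ++ b ++ c ++ b ++ e ∧ SC (ρ ^ κ) b ∧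
      a.length = q.1 ∧ b.length = q.2.1 ∧ c.length = q.2.2.1 ∧ e.length = q.2.2.2) with hTdef
  set Q : Finset (ℕ × ℕ × ℕ × ℕ) :=
    (Finset.range (M+1)) ×ˢ (Finset.range (M+1)) ×ˢ (Finset.range (M+1)) ×ˢ (Finset.range (M+1))
    with hQdef
  have hsub : S ⊆ Q.biUnion T := by
    intro w hw
    have hw' := hw
    rw [hSdef, Finset.mem_filter] at hw'
    obtain ⟨hwW, hSC, a, b, c, e, hdec, hSCb⟩ := hw'
    have hlenw : w.length ≤ M := hlen w hSC
    have hlens : a.length + b.length + c.length + b.length + e.length = w.length := by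
      rw [hdec]; simp; omega
    refine Finset.mem_biUnion.mpr ⟨(a.length, b.length, c.length, e.length), ?_, ?_⟩
    · simp only [hQdef, Finset.mem_product, Finset.mem_range]
      refine ⟨?_, ?_, ?_, ?_⟩ <;> omega
    · rw [hTdef]
      exact Finset.mem_filter.mpr ⟨hw, a, b, c, e, hdec, hSCb, rfl, rfl, rfl, rfl⟩
  have key : ∀ q ∈ Q, ∑ w ∈ T q, m w ≤ Chat * R := by
    rintro ⟨i, j, k, l⟩ _
    set φ : List α → List α × List α × List α × List α := fun w =>
      (w.take i, (w.drop i).take j, (w.drop (i+j)).take k, w.drop (i+j+k+j)) with hφdef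
    have hφ : ∀ w ∈ T (i,j,k,l),
        w = (φ w).1 ++ (φ w).2.1 ++ (φ w).2.2.1 ++ (φ w).2.1 ++ (φ w).2.2.2 ∧
        SC (ρ^κ) (φ w).2.1 ∧ (φ w).1.length = i ∧ (φ w).2.1.length = j ∧
        (φ w).2.2.1.length = k ∧ (φ w).2.2.2.length = l := by
      intro w hw
      rw [hTdef, Finset.mem_filter] at hw
      obtain ⟨hwS, a, b, c, e, hdec, hSCb, hi, hj, hk, hl⟩ := hw
      obtain ⟨h1, h2, h3, h4⟩ := decomp_canon a b c e
      have hφw : φ w = (a, b, c, e) := by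
        subst hi hj hk hl
        simp only [hφdef, hdec]
        rw [h1, h2, h3, h4]
      rw [hφw]
      exact ⟨hdec, hSCb, hi, hj, hk, hl⟩
    have hmemT : ∀ w ∈ T (i,j,k,l),
        (φ w).1 ∈ W i ∧ (φ w).2.1 ∈ W j ∧ (φ w).2.2.1 ∈ W k ∧ (φ w).2.2.2 ∈ W l := by
      intro w hw
      obtain ⟨hdec, _, hi, hj, hk, hl⟩ := hφ w hw
      have hwS : w ∈ S := Finset.mem_filter.mp (by rw [hTdef] at hw; exact hw) |>.1
      have hwW : w ∈ W w.length := hmemW w (Finset.mem_filter.mp (by rw [hSdef] at hwS; exact hwS)).1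
      rw [hdec] at hwW
      obtain ⟨hA, hB, hC, hE⟩ := hfactor _ _ _ _ hwW
      rw [hi] at hA; rw [hj] at hB; rw [hk] at hC; rw [hl] at hE
      exact ⟨hA, hB, hC, hE⟩
    -- pointwise bound
    have hpt : ∀ w ∈ T (i,j,k,l), m w ≤ (Chat * R) *
        (m (φ w).1 * m (φ w).2.1 * m (φ w).2.2.1 * m (φ w).2.2.2) := by
      intro w hw
      obtain ⟨hdec, hSCb, _, _, _, _⟩ := hφ w hw
      set A := (φ w).1; set B := (φ w).2.1; set C := (φ w).2.2.1; set E := (φ w).2.2.2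
      have h2 := (hQB A B C E).2
      have hBR : m B ≤ R := hscale B hSCb
      calc m w = m (A ++ B ++ C ++ B ++ E) := by rw [← hdec]
        _ ≤ Chat * (m A * m B * m C * m B * m E) := h2
        _ ≤ (Chat * R) * (m A * m B * m C * m E) := by
            have hn : 0 ≤ m A * m B * m C :=
              mul_nonneg (mul_nonneg (hm0 A) (hm0 B)) (hm0 C)
            have : m A * m B * m C * m B * m E ≤ m A * m B * m C * R * m E :=
              mul_le_mul_of_nonneg_right (mul_le_mul_of_nonneg_left hBR hn) (hm0 E)
            calc Chat * (m A * m B * m C * m B * m E)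
                ≤ Chat * (m A * m B * m C * R * m E) :=
                  mul_le_mul_of_nonneg_left this hChat0.le
              _ = (Chat * R) * (m A * m B * m C * m E) := by ring
    have hinj : Set.InjOn φ (T (i,j,k,l) : Set (List α)) := by
      intro w1 h1 w2 h2 heq
      rw [(hφ w1 h1).1, (hφ w2 h2).1, heq]
    set f : List α × List α × List α × List α → ℝ :=
      fun p => m p.1 * m p.2.1 * m p.2.2.1 * m p.2.2.2 with hfdef
    have hfnn : ∀ p, 0 ≤ f p := fun p =>
      mul_nonneg (mul_nonneg (mul_nonneg (hm0 _) (hm0 _)) (hm0 _)) (hm0 _)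
    have hsum1 : ∑ w ∈ T (i,j,k,l), f (φ w) ≤ 1 := by
      have himg : (T (i,j,k,l)).image φ ⊆ W i ×ˢ W j ×ˢ W k ×ˢ W l := by
        intro p hp
        obtain ⟨w, hw, rfl⟩ := Finset.mem_image.mp hp
        obtain ⟨hA, hB, hC, hE⟩ := hmemT w hw
        simp only [Finset.mem_product]
        exact ⟨hA, hB, hC, hE⟩
      calc ∑ w ∈ T (i,j,k,l), f (φ w) = ∑ p ∈ (T (i,j,k,l)).image φ, f p :=
            (Finset.sum_image (fun x hx y hy h => hinj hx hy h)).symm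
        _ ≤ ∑ p ∈ W i ×ˢ W j ×ˢ W k ×ˢ W l, f p :=
            Finset.sum_le_sum_of_subset_of_nonneg himg (fun p _ _ => hfnn p)
        _ = ∑ a ∈ W i, ∑ b ∈ W j, ∑ c ∈ W k, ∑ e ∈ W l, m a * m b * m c * m e := by
            rw [Finset.sum_product]
            simp only [Finset.sum_product, hfdef]
        _ ≤ ∑ a ∈ W i, ∑ b ∈ W j, ∑ c ∈ W k, m a * m b * m c := by
            refine Finset.sum_le_sum fun a _ => Finset.sum_le_sum fun b _ =>
              Finset.sum_le_sum fun c _ => ?_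
            rw [← Finset.mul_sum]
            exact mul_le_of_le_one_right
              (mul_nonneg (mul_nonneg (hm0 a) (hm0 b)) (hm0 c)) (hsum l)
        _ ≤ ∑ a ∈ W i, ∑ b ∈ W j, m a * m b := by
            refine Finset.sum_le_sum fun a _ => Finset.sum_le_sum fun b _ => ?_
            rw [← Finset.mul_sum]
            exact mul_le_of_le_one_right (mul_nonneg (hm0 a) (hm0 b)) (hsum k)
        _ ≤ ∑ a ∈ W i, m a := by
            refine Finset.sum_le_sum fun a _ => ?_
            rw [← Finset.mul_sum]
            exact mul_le_of_le_one_right (hm0 a) (hsum j)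
        _ ≤ 1 := hsum i
    calc ∑ w ∈ T (i,j,k,l), m w ≤ ∑ w ∈ T (i,j,k,l), (Chat * R) * f (φ w) :=
          Finset.sum_le_sum hpt
      _ = (Chat * R) * ∑ w ∈ T (i,j,k,l), f (φ w) := by rw [Finset.mul_sum]
      _ ≤ (Chat * R) * 1 :=
          mul_le_mul_of_nonneg_left hsum1 (mul_nonneg hChat0.le hR0)
      _ = Chat * R := mul_one _
  have hQcard : (Q.card : ℝ) = ((M : ℝ) + 1) ^ 4 := by
    simp only [hQdef, Finset.card_product, Finset.card_range]
    push_cast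
    ring
  calc ∑ w ∈ S, m w ≤ ∑ w ∈ Q.biUnion T, m w :=
        Finset.sum_le_sum_of_subset_of_nonneg hsub (fun w _ _ => hm0 w)
    _ ≤ ∑ q ∈ Q, ∑ w ∈ T q, m w := sum_biUnion_le' m hm0 Q T
    _ ≤ ∑ _q ∈ Q, Chat * R := Finset.sum_le_sum key
    _ = (Q.card : ℝ) * (Chat * R) := by rw [Finset.sum_const, nsmul_eq_mul]
    _ = ((M : ℝ) + 1) ^ 4 * Chat * Cbar * ρ ^ (κ * d) := by rw [hQcard, hRdef]; ring
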